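/- arXiv:1712.09932 — 4 statements merged into one kernel-verified Lean document; each statement's English description precedes it below -/
import Mathlib

section
/- The stabilizer in $GL_2(\mathbb{C})$ of the binary cubic form $w_0^3 + w_1^3$ is the finite group consisting of the diagonal matrices $\mathrm{diag}(\xi_1,\xi_2)$ and antidiagonal matrices with entries $\xi_1, \xi_2$ where $\xi_1^3 = \xi_2^3 = 1$; in particular this stabilizer has order 18. -/
open MvPolynomial

/-- The action of `GL₂(ℂ)` on binary forms by linear substitution of the variables. -/
noncomputable def glAct (g : GL (Fin 2) ℂ) (f : MvPolynomial (Fin 2) ℂ) :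
    MvPolynomial (Fin 2) ℂ :=
  aeval (fun i => ∑ j, C ((g : Matrix (Fin 2) (Fin 2) ℂ) j i) * X j) f

/-- The binary cubic form `w₀³ + w₁³`. -/
noncomputable def fermatCubic : MvPolynomial (Fin 2) ℂ :=
  (X 0) ^ 3 + (X 1) ^ 3

theorem key (g : GL (Fin 2) ℂ) :
    glAct g fermatCubic = fermatCubic ↔
      ∃ ξ₁ ξ₂ : ℂ, ξ₁ ^ 3 = 1 ∧ ξ₂ ^ 3 = 1 ∧
        ((g : Matrix (Fin 2) (Fin 2) ℂ) = !![ξ₁, 0; 0, ξ₂] ∨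
         (g : Matrix (Fin 2) (Fin 2) ℂ) = !![0, ξ₁; ξ₂, 0]) := by
  set M := (g : Matrix (Fin 2) (Fin 2) ℂ) with hMdef
  have hMeta : M = !![M 0 0, M 0 1; M 1 0, M 1 1] := Matrix.etaExpand_eq M |>.symm
  set a := M 0 0; set b := M 0 1; set c := M 1 0; set d := M 1 1
  have hdet : a * d - b * c ≠ 0 := by
    have h1 : IsUnit M.det := (Matrix.isUnit_iff_isUnit_det M).mp ⟨g, rfl⟩
    rw [Matrix.det_fin_two] at h1
    exact h1.ne_zero
  constructor
  · intro h
    have H : ∀ x y : ℂ, (a * x + c * y) ^ 3 + (b * x + d * y) ^ 3 = x ^ 3 + y ^ 3 := by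
      intro x y
      have := congrArg (eval ![x, y]) h
      simpa [glAct, fermatCubic, Fin.sum_univ_two] using this
    have e1 : a ^ 3 + b ^ 3 = 1 := by have := H 1 0; linear_combination this
    have e2 : c ^ 3 + d ^ 3 = 1 := by have := H 0 1; linear_combination this
    have hp : a ^ 2 * c + b ^ 2 * d = 0 := by
      have h3 := H 1 1; have h4 := H 1 (-1)
      linear_combination (h3 - h4) / 6 - (e2) / 3
    have hq : a * c ^ 2 + b * d ^ 2 = 0 := by
      have h3 := H 1 1; have h4 := H 1 (-1)
      linear_combination (h3 + h4) / 6 - e1 / 3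
    by_cases ha : a = 0
    · have hb3 : b ^ 3 = 1 := by linear_combination e1 - (a ^ 2) * ha
      have hb : b ≠ 0 := by intro h0; rw [h0] at hb3; simp at hb3
      have hd0 : d = 0 := by
        have h0 : b ^ 2 * d = 0 := by linear_combination hp - c * a * ha
        rcases mul_eq_zero.mp h0 with h' | h'
        · exact absurd (pow_eq_zero_iff two_ne_zero |>.mp h') hb
        · exact h'
      have hc3 : c ^ 3 = 1 := by linear_combination e2 - d ^ 2 * hd0
      exact ⟨b, c, hb3, hc3, Or.inr (by rw [hMeta, ha, hd0])⟩
    · by_cases hc : c = 0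
      · have hd3 : d ^ 3 = 1 := by linear_combination e2 - (c ^ 2) * hc
        have hd : d ≠ 0 := by intro h0; rw [h0] at hd3; simp at hd3
        have hb : b = 0 := by
          have h0 : b ^ 2 * d = 0 := by linear_combination hp - a ^ 2 * hc
          rcases mul_eq_zero.mp h0 with h' | h'
          · exact pow_eq_zero_iff two_ne_zero |>.mp h'
          · exact absurd h' hd
        have ha3 : a ^ 3 = 1 := by linear_combination e1 - b ^ 2 * hb
        exact ⟨a, d, ha3, hd3, Or.inl (by rw [hMeta, hb, hc])⟩
      · exfalso
        have hb : b ≠ 0 := by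
          intro h0
          have h1 : a ^ 2 * c = 0 := by linear_combination hp - d * b * h0
          rcases mul_eq_zero.mp h1 with h' | h'
          · exact ha (pow_eq_zero_iff two_ne_zero |>.mp h')
          · exact hc h'
        have hd : d ≠ 0 := by
          intro h0
          have h1 : a ^ 2 * c = 0 := by linear_combination hp - b ^ 2 * h0
          rcases mul_eq_zero.mp h1 with h' | h'
          · exact ha (pow_eq_zero_iff two_ne_zero |>.mp h')
          · exact hc h'
        have key0 : a * b * c * d * (a * d - b * c) = 0 := by
          linear_combination a ^ 2 * c * hq - a * c ^ 2 * hp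
        rcases mul_eq_zero.mp key0 with h' | h'
        · rcases mul_eq_zero.mp h' with h'' | h''
          · rcases mul_eq_zero.mp h'' with h3 | h3
            · rcases mul_eq_zero.mp h3 with h4 | h4
              · exact ha h4
              · exact hb h4
            · exact hc h3
          · exact hd h''
        · exact hdet h'
  · rintro ⟨ξ₁, ξ₂, h1, h2, hM | hM⟩ <;>
    · rw [glAct, fermatCubic, ← hMdef, hM]
      simp [Fin.sum_univ_two, mul_pow, ← C_pow, h1, h2]
      try ring

section AuxCard
open Polynomial

noncomputable abbrev U3 := (nthRootsFinset 3 (1 : ℂ) : Finset ℂ)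

noncomputable def stabMat (p : U3 × U3 × Bool) : Matrix (Fin 2) (Fin 2) ℂ :=
  if p.2.2 then !![0, (p.1 : ℂ); (p.2.1 : ℂ), 0] else !![(p.1 : ℂ), 0; 0, (p.2.1 : ℂ)]

lemma stabMat_det (p : U3 × U3 × Bool) : (stabMat p).det ≠ 0 := by
  have h1 := ne_zero_of_mem_nthRootsFinset one_ne_zero p.1.2
  have h2 := ne_zero_of_mem_nthRootsFinset one_ne_zero p.2.1.2
  rcases p with ⟨ξ₁, ξ₂, _ | _⟩ <;>
    simp_all [stabMat, Matrix.det_fin_two_of, sub_eq_zero, mul_ne_zero, eq_comm]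

noncomputable def stabGL (p : U3 × U3 × Bool) : GL (Fin 2) ℂ :=
  Matrix.GeneralLinearGroup.mkOfDetNeZero (stabMat p) (stabMat_det p)

lemma stabGL_coe (p : U3 × U3 × Bool) : (stabGL p : Matrix (Fin 2) (Fin 2) ℂ) = stabMat p := rfl

lemma stabGL_inj : Function.Injective stabGL := by
  rintro ⟨ξ₁, ξ₂, b⟩ ⟨η₁, η₂, c⟩ h
  have hm : stabMat (ξ₁, ξ₂, b) = stabMat (η₁, η₂, c) := by
    rw [← stabGL_coe, ← stabGL_coe, h]
  have h1 := ne_zero_of_mem_nthRootsFinset one_ne_zero ξ₁.2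
  have h2 := ne_zero_of_mem_nthRootsFinset one_ne_zero η₁.2
  rcases b <;> rcases c <;>
    simp only [stabMat, if_true, if_false, Bool.false_eq_true] at hm <;>
    simp only [Prod.mk.injEq, Subtype.ext_iff]
  · refine ⟨?_, ?_, trivial⟩
    · simpa using congrFun (congrFun hm 0) 0
    · simpa using congrFun (congrFun hm 1) 1
  · exact absurd (by simpa using congrFun (congrFun hm 0) 0) h1
  · exact absurd (by simpa using (congrFun (congrFun hm 0) 0).symm) h2
  · refine ⟨?_, ?_, trivial⟩
    · simpa using congrFun (congrFun hm 0) 1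
    · simpa using congrFun (congrFun hm 1) 0

lemma mem_u3 {x : ℂ} (h : x ^ 3 = 1) : x ∈ nthRootsFinset 3 (1 : ℂ) :=
  (mem_nthRootsFinset (by norm_num) (1 : ℂ)).mpr h

lemma u3_pow (x : U3) : (x : ℂ) ^ 3 = 1 := (mem_nthRootsFinset (by norm_num) (1 : ℂ)).mp x.2

lemma stab_eq_range :
    {g : GL (Fin 2) ℂ | glAct g fermatCubic = fermatCubic} = Set.range stabGL := by
  ext g
  simp only [Set.mem_setOf_eq, key, Set.mem_range]
  constructor
  · rintro ⟨ξ₁, ξ₂, h1, h2, hM | hM⟩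
    · exact ⟨(⟨ξ₁, mem_u3 h1⟩, ⟨ξ₂, mem_u3 h2⟩, false),
        Units.ext (by rw [stabGL_coe]; simpa [stabMat] using hM.symm)⟩
    · exact ⟨(⟨ξ₁, mem_u3 h1⟩, ⟨ξ₂, mem_u3 h2⟩, true),
        Units.ext (by rw [stabGL_coe]; simpa [stabMat] using hM.symm)⟩
  · rintro ⟨⟨ξ₁, ξ₂, b⟩, rfl⟩
    refine ⟨ξ₁, ξ₂, u3_pow ξ₁, u3_pow ξ₂, ?_⟩
    rcases b
    · exact Or.inl (by rw [stabGL_coe]; simp [stabMat])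
    · exact Or.inr (by rw [stabGL_coe]; simp [stabMat])

lemma card18 : Nat.card {g : GL (Fin 2) ℂ | glAct g fermatCubic = fermatCubic} = 18 := by
  rw [stab_eq_range, Nat.card_range_of_injective stabGL_inj]
  have hc : (nthRootsFinset 3 (1 : ℂ)).card = 3 :=
    (Complex.isPrimitiveRoot_exp 3 (by norm_num)).card_nthRootsFinset
  rw [Nat.card_eq_fintype_card, Fintype.card_prod, Fintype.card_prod, Fintype.card_coe,
    Fintype.card_bool, hc]

end AuxCard

/-- The stabilizer in `GL₂(ℂ)` of the binary cubic form `w₀³ + w₁³` consists exactly of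
the diagonal matrices `diag(ξ₁, ξ₂)` and the antidiagonal matrices with entries `ξ₁, ξ₂`,
where `ξ₁³ = ξ₂³ = 1`; in particular, the stabilizer has order `18`. -/
theorem stabilizer_fermat_cubic :
    (∀ g : GL (Fin 2) ℂ,
      glAct g fermatCubic = fermatCubic ↔
        ∃ ξ₁ ξ₂ : ℂ, ξ₁ ^ 3 = 1 ∧ ξ₂ ^ 3 = 1 ∧
          ((g : Matrix (Fin 2) (Fin 2) ℂ) = !![ξ₁, 0; 0, ξ₂] ∨
           (g : Matrix (Fin 2) (Fin 2) ℂ) = !![0, ξ₁; ξ₂, 0])) ∧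
    Nat.card {g : GL (Fin 2) ℂ | glAct g fermatCubic = fermatCubic} = 18 := by
  exact ⟨key, card18⟩
end

section
/- A binary cubic form $f = x_0 w_0^3 + 3x_1 w_0^2 w_1 + 3x_2 w_0 w_1^2 + x_3 w_1^3$ with complex coefficients is a cube of a linear form (or zero) if and only if all $2\times 2$ minors of the matrix $\begin{bmatrix} x_0 & x_1 & x_2 \\ x_1 & x_2 & x_3 \end{bmatrix}$ vanish, i.e. $x_0 x_2 = x_1^2$, $x_1 x_3 = x_2^2$, and $x_0 x_3 = x_1 x_2$. -/
open MvPolynomial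

/-- A binary cubic form `f = x₀ w₀³ + 3 x₁ w₀² w₁ + 3 x₂ w₀ w₁² + x₃ w₁³` is the cube of
a linear form (or zero) if and only if all `2 × 2` minors of the catalecticant matrix
`[[x₀, x₁, x₂], [x₁, x₂, x₃]]` vanish. -/
theorem cube_of_linear_iff_minors_vanish (x₀ x₁ x₂ x₃ : ℂ) :
    (∃ a b : ℂ,
      (C x₀ * X 0 ^ 3 + C (3 * x₁) * X 0 ^ 2 * X 1 + C (3 * x₂) * X 0 * X 1 ^ 2 +
          C x₃ * X 1 ^ 3 : MvPolynomial (Fin 2) ℂ) =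
        (C a * X 0 + C b * X 1) ^ 3) ↔
      (x₀ * x₂ = x₁ ^ 2 ∧ x₁ * x₃ = x₂ ^ 2 ∧ x₀ * x₃ = x₁ * x₂) := by
  constructor
  · rintro ⟨a, b, h⟩
    have e : ∀ u v : ℂ, x₀ * u ^ 3 + 3 * x₁ * u ^ 2 * v + 3 * x₂ * u * v ^ 2 + x₃ * v ^ 3
        = (a * u + b * v) ^ 3 := by
      intro u v
      have := congrArg (eval ![u, v]) h
      simpa using this
    have h10 := e 1 0
    have h01 := e 0 1
    have h11 := e 1 1
    have h1m := e 1 (-1)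
    have hx0 : x₀ = a ^ 3 := by linear_combination h10
    have hx3 : x₃ = b ^ 3 := by linear_combination h01
    have hx2 : x₂ = a * b ^ 2 := by linear_combination h11 / 6 + h1m / 6 - h10 / 3
    have hx1 : x₁ = a ^ 2 * b := by linear_combination h11 / 6 - h1m / 6 - h01 / 3
    rw [hx0, hx1, hx2, hx3]
    refine ⟨by ring, by ring, by ring⟩
  · rintro ⟨m1, m2, m3⟩
    have key : ∀ a b : ℂ, x₀ = a ^ 3 → x₁ = a ^ 2 * b → x₂ = a * b ^ 2 → x₃ = b ^ 3 →
        (C x₀ * X 0 ^ 3 + C (3 * x₁) * X 0 ^ 2 * X 1 + C (3 * x₂) * X 0 * X 1 ^ 2 +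
          C x₃ * X 1 ^ 3 : MvPolynomial (Fin 2) ℂ) = (C a * X 0 + C b * X 1) ^ 3 := by
      rintro a b rfl rfl rfl rfl
      simp only [map_mul, map_pow, map_ofNat]
      ring
    by_cases hx0 : x₀ = 0
    · have hx1 : x₁ = 0 := by
        have : x₁ ^ 2 = 0 := by rw [← m1, hx0]; ring
        exact pow_eq_zero_iff (n := 2) (by norm_num) |>.mp this
      have hx2 : x₂ = 0 := by
        have : x₂ ^ 2 = 0 := by rw [← m2, hx1]; ring
        exact pow_eq_zero_iff (n := 2) (by norm_num) |>.mp this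
      obtain ⟨b, hb⟩ := Complex.isAlgClosed.exists_pow_nat_eq x₃ (n := 3) (by norm_num)
      exact ⟨0, b, key 0 b (by rw [hx0]; ring) (by rw [hx1]; ring) (by rw [hx2]; ring)
        (by rw [← hb])⟩
    · obtain ⟨a, ha⟩ := Complex.isAlgClosed.exists_pow_nat_eq x₀ (n := 3) (by norm_num)
      have ha0 : a ≠ 0 := by
        rintro rfl; exact hx0 (by rw [← ha]; ring)
      refine ⟨a, x₁ / a ^ 2, key a _ ha.symm ?_ ?_ ?_⟩
      · field_simp
      · field_simp
        linear_combination m1 + x₂ * ha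
      · field_simp
        linear_combination x₁ * m1 + (a ^ 3) * m3 + (x₃ * a ^ 3 + x₁ * x₂) * ha
end

section
/- For each $n > 0$ and each $\lambda \in \mathbb{C}$, the representation $R_n(\lambda)$ of the quiver $\hat{D}_4$ (four source vertices $1,2,3,4$ each with one arrow into a central sink $5$) given by $V_1 = V_2 = V_3 = V_4 = \mathbb{C}^n$, $V_5 = \mathbb{C}^{2n}$, with the four maps $\begin{bmatrix} I_n \\ 0 \end{bmatrix}$, $\begin{bmatrix} 0 \\ I_n \end{bmatrix}$, $\begin{bmatrix} I_n \\ I_n \end{bmatrix}$, $\begin{bmatrix} I_n \\ J_n(\lambda) \end{bmatrix}$, is an indecomposable representation. -/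
/-- A finite-dimensional complex representation of the extended Dynkin quiver `D̂₄`:
four source vertices `1, 2, 3, 4`, each with one arrow into the central sink `5`. -/
structure D4HatRep where
  V1 : Type
  V2 : Type
  V3 : Type
  V4 : Type
  V5 : Type
  [add1 : AddCommGroup V1]
  [add2 : AddCommGroup V2]
  [add3 : AddCommGroup V3]
  [add4 : AddCommGroup V4]
  [add5 : AddCommGroup V5]
  [mod1 : Module ℂ V1]
  [mod2 : Module ℂ V2]
  [mod3 : Module ℂ V3]
  [mod4 : Module ℂ V4]
  [mod5 : Module ℂ V5]
  [fd1 : FiniteDimensional ℂ V1]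
  [fd2 : FiniteDimensional ℂ V2]
  [fd3 : FiniteDimensional ℂ V3]
  [fd4 : FiniteDimensional ℂ V4]
  [fd5 : FiniteDimensional ℂ V5]
  f1 : V1 →ₗ[ℂ] V5
  f2 : V2 →ₗ[ℂ] V5
  f3 : V3 →ₗ[ℂ] V5
  f4 : V4 →ₗ[ℂ] V5

attribute [instance] D4HatRep.add1 D4HatRep.add2 D4HatRep.add3 D4HatRep.add4 D4HatRep.add5
attribute [instance] D4HatRep.mod1 D4HatRep.mod2 D4HatRep.mod3 D4HatRep.mod4 D4HatRep.mod5
attribute [instance] D4HatRep.fd1 D4HatRep.fd2 D4HatRep.fd3 D4HatRep.fd4 D4HatRep.fd5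

/-- An isomorphism of representations of `D̂₄`: a family of linear isomorphisms at each
vertex commuting with the structure maps. -/
structure D4HatRepIso (M N : D4HatRep) where
  e1 : M.V1 ≃ₗ[ℂ] N.V1
  e2 : M.V2 ≃ₗ[ℂ] N.V2
  e3 : M.V3 ≃ₗ[ℂ] N.V3
  e4 : M.V4 ≃ₗ[ℂ] N.V4
  e5 : M.V5 ≃ₗ[ℂ] N.V5
  comm1 : ∀ v, e5 (M.f1 v) = N.f1 (e1 v)
  comm2 : ∀ v, e5 (M.f2 v) = N.f2 (e2 v)
  comm3 : ∀ v, e5 (M.f3 v) = N.f3 (e3 v)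
  comm4 : ∀ v, e5 (M.f4 v) = N.f4 (e4 v)

/-- Direct sum of two representations of `D̂₄`. -/
noncomputable def D4HatRep.sum (M N : D4HatRep) : D4HatRep where
  V1 := M.V1 × N.V1
  V2 := M.V2 × N.V2
  V3 := M.V3 × N.V3
  V4 := M.V4 × N.V4
  V5 := M.V5 × N.V5
  f1 := M.f1.prodMap N.f1
  f2 := M.f2.prodMap N.f2
  f3 := M.f3.prodMap N.f3
  f4 := M.f4.prodMap N.f4

/-- The zero representation. -/
def D4HatRep.IsZero (M : D4HatRep) : Prop :=
  Subsingleton M.V1 ∧ Subsingleton M.V2 ∧ Subsingleton M.V3 ∧ Subsingleton M.V4 ∧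
    Subsingleton M.V5

/-- A representation is indecomposable if it is nonzero and not isomorphic to a direct
sum of two nonzero representations. -/
def D4HatRep.Indecomposable (M : D4HatRep) : Prop :=
  ¬ M.IsZero ∧
    ∀ N P : D4HatRep, Nonempty (D4HatRepIso M (N.sum P)) → N.IsZero ∨ P.IsZero

/-- The `n × n` Jordan block with eigenvalue `lam`, as a linear map `ℂⁿ → ℂⁿ`. -/
noncomputable def jordan (n : ℕ) (lam : ℂ) : (Fin n → ℂ) →ₗ[ℂ] (Fin n → ℂ) :=
  Matrix.toLin'
    (Matrix.of fun i j : Fin n =>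
      if i = j then lam else if (j : ℕ) = (i : ℕ) + 1 then 1 else 0)

/-- The representation `R_n(λ)` of `D̂₄`: `ℂⁿ` at the four source vertices, `ℂ²ⁿ` at the
sink, with structure maps `[I; 0]`, `[0; I]`, `[I; I]` and `[I; J_n(λ)]`. -/
noncomputable def R (n : ℕ) (lam : ℂ) : D4HatRep where
  V1 := Fin n → ℂ
  V2 := Fin n → ℂ
  V3 := Fin n → ℂ
  V4 := Fin n → ℂ
  V5 := (Fin n → ℂ) × (Fin n → ℂ)
  f1 := LinearMap.prod LinearMap.id 0
  f2 := LinearMap.prod 0 LinearMap.id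
  f3 := LinearMap.prod LinearMap.id LinearMap.id
  f4 := LinearMap.prod LinearMap.id (jordan n lam)


section Aux
variable {n : ℕ} {lam : ℂ}

noncomputable def Nmap (n : ℕ) (lam : ℂ) : Module.End ℂ (Fin n → ℂ) :=
  jordan n lam - lam • 1

variable {n : ℕ} {lam : ℂ}

lemma jordan_apply (x : Fin n → ℂ) (i : Fin n) :
    jordan n lam x i = lam * x i + (if h : (i:ℕ)+1 < n then x ⟨(i:ℕ)+1, h⟩ else 0) := by
  classical
  have step : jordan n lam x i =
      ∑ j : Fin n, (if i = j then lam else if (j:ℕ) = (i:ℕ)+1 then 1 else 0) * x j := by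
    simp [jordan, Matrix.toLin'_apply, Matrix.mulVec, dotProduct]
  rw [step]
  have split : ∀ j : Fin n,
      (if i = j then lam else if (j:ℕ) = (i:ℕ)+1 then (1:ℂ) else 0) * x j
        = (if i = j then lam * x j else 0)
          + (if (j:ℕ) = (i:ℕ)+1 then x j else 0) := by
    intro j
    by_cases h : i = j
    · subst h; simp
    · by_cases h2 : (j:ℕ) = (i:ℕ)+1 <;> simp [h, h2]
  rw [Finset.sum_congr rfl fun j _ => split j, Finset.sum_add_distrib]
  congr 1
  · simp
  · by_cases h : (i:ℕ)+1 < n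
    · rw [dif_pos h, Finset.sum_eq_single (⟨(i:ℕ)+1, h⟩ : Fin n)]
      · simp
      · intro j _ hj; rw [if_neg]; intro hc; exact hj (Fin.ext hc)
      · intro hc; exact absurd (Finset.mem_univ _) hc
    · rw [dif_neg h]
      apply Finset.sum_eq_zero
      intro j _
      rw [if_neg]; intro hc; exact h (hc ▸ j.isLt)

lemma Nmap_apply (x : Fin n → ℂ) (i : Fin n) :
    Nmap n lam x i = if h : (i:ℕ)+1 < n then x ⟨(i:ℕ)+1, h⟩ else 0 := by
  simp [Nmap, jordan_apply]

lemma Nmap_pow (k : ℕ) (x : Fin n → ℂ) (i : Fin n) :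
    (Nmap n lam ^ k) x i = if h : (i:ℕ)+k < n then x ⟨(i:ℕ)+k, h⟩ else 0 := by
  induction k generalizing x i with
  | zero => simp
  | succ k ih =>
    rw [pow_succ, Module.End.mul_apply, ih (Nmap n lam x) i]
    by_cases h : (i:ℕ)+k < n
    · rw [dif_pos h, Nmap_apply]
      by_cases h2 : (i:ℕ)+k+1 < n
      · rw [dif_pos h2, dif_pos (show (i:ℕ)+(k+1) < n by omega)]; exact congrArg x (Fin.ext (by simp [Nat.add_assoc]))
      · rw [dif_neg h2, dif_neg (show ¬ ((i:ℕ)+(k+1) < n) by omega)]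
    · rw [dif_neg h, dif_neg (show ¬ ((i:ℕ)+(k+1) < n) by omega)]

lemma Nmap_pow_n : (Nmap n lam) ^ n = 0 := by
  apply LinearMap.ext; intro x; funext i
  rw [Nmap_pow, dif_neg (by omega)]; rfl

lemma ker_vanish (v : Fin n → ℂ) (hv : Nmap n lam v = 0) (j : Fin n) (hj : 0 < (j:ℕ)) :
    v j = 0 := by
  obtain ⟨m, hm⟩ : ∃ m : ℕ, (j:ℕ) = m + 1 := ⟨(j:ℕ)-1, by omega⟩
  have hmn : m + 1 < n := hm ▸ j.isLt
  have h := congrFun hv ⟨m, by omega⟩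
  rw [Nmap_apply] at h
  rw [dif_pos (show (m:ℕ)+1 < n from hmn)] at h
  have : j = (⟨m+1, hmn⟩ : Fin n) := Fin.ext hm
  rw [this]; exact h

lemma exists_ker_vec (A : Module.End ℂ (Fin n → ℂ))
    (hcomm : Commute A (Nmap n lam))
    (w : Fin n → ℂ) (hw0 : w ≠ 0) (hAw : A w = 0) :
    ∃ v : Fin n → ℂ, v ≠ 0 ∧ A v = 0 ∧ Nmap n lam v = 0 := by
  classical
  have hex : ∃ k, (Nmap n lam ^ k) w = 0 := ⟨n, by rw [Nmap_pow_n]; rfl⟩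
  have hk0 : Nat.find hex ≠ 0 := by
    intro h
    have := Nat.find_spec hex
    rw [h] at this
    simp at this
    exact hw0 this
  obtain ⟨m, hm⟩ : ∃ m, Nat.find hex = m + 1 := ⟨Nat.find hex - 1, by omega⟩
  refine ⟨(Nmap n lam ^ m) w, ?_, ?_, ?_⟩
  · exact Nat.find_min hex (by omega)
  · have hc : A * Nmap n lam ^ m = Nmap n lam ^ m * A := (hcomm.pow_right m)
    have := LinearMap.congr_fun hc w
    rw [Module.End.mul_apply, Module.End.mul_apply, hAw] at this
    rw [this, map_zero]
  · have : Nmap n lam ((Nmap n lam ^ m) w) = (Nmap n lam ^ (m+1)) w := by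
      rw [pow_succ']; rfl
    rw [this, ← hm]
    exact Nat.find_spec hex

lemma idem_eq_zero_or_id (hn : 0 < n) (A : Module.End ℂ (Fin n → ℂ))
    (hA : A * A = A) (hcomm : Commute A (jordan n lam)) :
    A = 0 ∨ A = 1 := by
  by_contra hcon
  push_neg at hcon
  obtain ⟨h0, h1⟩ := hcon
  have hcN : Commute A (Nmap n lam) := by
    unfold Nmap
    exact hcomm.sub_right ((Commute.one_right A).smul_right lam)
  obtain ⟨w, hw⟩ : ∃ w, A w ≠ w := by
    by_contra h; push_neg at h; exact h1 (LinearMap.ext h)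
  have h10 : A w - w ≠ 0 := sub_ne_zero.mpr hw
  have hker : A (A w - w) = 0 := by
    have := LinearMap.congr_fun hA w
    rw [Module.End.mul_apply] at this
    rw [map_sub, this, sub_self]
  obtain ⟨v1, hv1ne, hv1A, hv1N⟩ := exists_ker_vec A hcN _ h10 hker
  set B := (1 : Module.End ℂ (Fin n → ℂ)) - A with hB
  have hBc : Commute B (Nmap n lam) := (Commute.one_left _).sub_left hcN
  obtain ⟨u, hu⟩ : ∃ u, A u ≠ 0 := by
    by_contra h; push_neg at h
    exact h0 (LinearMap.ext fun x => h x)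
  have hBu : B (A u) = 0 := by
    have := LinearMap.congr_fun hA u
    rw [Module.End.mul_apply] at this
    simp [hB, this]
  obtain ⟨v2, hv2ne, hv2B, hv2N⟩ := exists_ker_vec B hBc _ hu hBu
  have hv2fix : A v2 = v2 := by
    have : v2 - A v2 = 0 := by simpa [hB] using hv2B
    have := sub_eq_zero.mp this
    exact this.symm
  set z1 : Fin n := ⟨0, hn⟩ with hz1
  have hv10 : v1 z1 ≠ 0 := by
    intro h
    apply hv1ne
    funext j
    rcases Nat.eq_zero_or_pos (j:ℕ) with h' | h'
    · have : j = z1 := Fin.ext h'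
      rw [this, h]; rfl
    · exact ker_vanish v1 hv1N j h'
  have key : v2 = (v2 z1 * (v1 z1)⁻¹) • v1 := by
    funext j
    rcases Nat.eq_zero_or_pos (j:ℕ) with h' | h'
    · have : j = z1 := Fin.ext h'
      rw [this]
      show v2 z1 = (v2 z1 * (v1 z1)⁻¹) * v1 z1
      field_simp
    · rw [ker_vanish v2 hv2N j h']
      show (0:ℂ) = (v2 z1 * (v1 z1)⁻¹) * v1 j
      rw [ker_vanish v1 hv1N j h', mul_zero]
  apply hv2ne
  rw [← hv2fix, key, map_smul, hv1A, smul_zero]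

lemma endo_cases (hn : 0 < n)
    (ψ1 ψ2 ψ3 ψ4 : Module.End ℂ (Fin n → ℂ))
    (ψ5 : Module.End ℂ ((Fin n → ℂ) × (Fin n → ℂ)))
    (h1 : ∀ x, ψ5 (x, 0) = (ψ1 x, 0))
    (h2 : ∀ x, ψ5 (0, x) = (0, ψ2 x))
    (h3 : ∀ x, ψ5 (x, x) = (ψ3 x, ψ3 x))
    (h4 : ∀ x, ψ5 (x, jordan n lam x) = (ψ4 x, jordan n lam (ψ4 x)))
    (hidem : ∀ v, ψ5 (ψ5 v) = ψ5 v) :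
    ((∀ x, ψ1 x = 0) ∧ (∀ x, ψ2 x = 0) ∧ (∀ x, ψ3 x = 0) ∧ (∀ x, ψ4 x = 0) ∧ ∀ v, ψ5 v = 0)
    ∨ ((∀ x, ψ1 x = x) ∧ (∀ x, ψ2 x = x) ∧ (∀ x, ψ3 x = x) ∧ (∀ x, ψ4 x = x) ∧
        ∀ v, ψ5 v = v) := by
  have h5 : ∀ x y, ψ5 (x, y) = (ψ1 x, ψ2 y) := by
    intro x y
    have hxy : (x, y) = ((x, (0 : Fin n → ℂ)) + ((0 : Fin n → ℂ), y)) := by simp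
    rw [hxy, map_add, h1, h2, Prod.mk_add_mk, add_zero, zero_add]
  have e13 : ∀ x, ψ1 x = ψ3 x := fun x =>
    congrArg Prod.fst ((h5 x x).symm.trans (h3 x))
  have e23 : ∀ x, ψ2 x = ψ3 x := fun x =>
    congrArg Prod.snd ((h5 x x).symm.trans (h3 x))
  have e14 : ∀ x, ψ1 x = ψ4 x := fun x =>
    congrArg Prod.fst ((h5 x (jordan n lam x)).symm.trans (h4 x))
  have ecomm : ∀ x, ψ2 (jordan n lam x) = jordan n lam (ψ4 x) := fun x =>
    congrArg Prod.snd ((h5 x (jordan n lam x)).symm.trans (h4 x))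
  have hc : Commute ψ1 (jordan n lam) := by
    apply LinearMap.ext
    intro x
    show ψ1 (jordan n lam x) = jordan n lam (ψ1 x)
    rw [e13, ← e23, ecomm, ← e14]
  have hidem1 : ψ1 * ψ1 = ψ1 := by
    apply LinearMap.ext
    intro x
    have := hidem (x, 0)
    rw [h1, h1] at this
    exact congrArg Prod.fst this
  rcases idem_eq_zero_or_id hn ψ1 hidem1 hc with h | h
  · left
    have hz : ∀ x, ψ1 x = 0 := fun x => LinearMap.congr_fun h x
    refine ⟨hz, fun x => by rw [e23, ← e13, hz], fun x => by rw [← e13, hz],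
      fun x => by rw [← e14, hz], fun v => ?_⟩
    rw [show v = (v.1, v.2) from rfl, h5]
    rw [hz, e23, ← e13, hz]
    rfl
  · right
    have hz : ∀ x, ψ1 x = x := fun x => LinearMap.congr_fun h x
    refine ⟨hz, fun x => by rw [e23, ← e13, hz], fun x => by rw [← e13, hz],
      fun x => by rw [← e14, hz], fun v => ?_⟩
    rw [show v = (v.1, v.2) from rfl, h5]
    rw [hz, e23, ← e13, hz]

end Aux

/-- For each `n > 0` and `λ ∈ ℂ`, the representation `R_n(λ)` of `D̂₄` is
indecomposable. -/
theorem R_indecomposable (n : ℕ) (hn : 0 < n) (lam : ℂ) :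
    (R n lam).Indecomposable := by
  constructor
  · rintro ⟨hs1, -⟩
    have h : (fun _ : Fin n => (0:ℂ)) = (fun _ => 1) :=
      @Subsingleton.elim ((R n lam).V1) hs1 _ _
    have h0 := congrFun h ⟨0, hn⟩
    simp at h0
  · rintro N P ⟨φ⟩
    let π1 : (N.V1 × P.V1) →ₗ[ℂ] (N.V1 × P.V1) := (LinearMap.fst ℂ _ _).prod 0
    let π2 : (N.V2 × P.V2) →ₗ[ℂ] (N.V2 × P.V2) := (LinearMap.fst ℂ _ _).prod 0
    let π3 : (N.V3 × P.V3) →ₗ[ℂ] (N.V3 × P.V3) := (LinearMap.fst ℂ _ _).prod 0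
    let π4 : (N.V4 × P.V4) →ₗ[ℂ] (N.V4 × P.V4) := (LinearMap.fst ℂ _ _).prod 0
    let π5 : (N.V5 × P.V5) →ₗ[ℂ] (N.V5 × P.V5) := (LinearMap.fst ℂ _ _).prod 0
    let ψ1 : Module.End ℂ (Fin n → ℂ) :=
      φ.e1.symm.toLinearMap ∘ₗ π1 ∘ₗ φ.e1.toLinearMap
    let ψ2 : Module.End ℂ (Fin n → ℂ) :=
      φ.e2.symm.toLinearMap ∘ₗ π2 ∘ₗ φ.e2.toLinearMap
    let ψ3 : Module.End ℂ (Fin n → ℂ) :=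
      φ.e3.symm.toLinearMap ∘ₗ π3 ∘ₗ φ.e3.toLinearMap
    let ψ4 : Module.End ℂ (Fin n → ℂ) :=
      φ.e4.symm.toLinearMap ∘ₗ π4 ∘ₗ φ.e4.toLinearMap
    let ψ5 : Module.End ℂ ((Fin n → ℂ) × (Fin n → ℂ)) :=
      φ.e5.symm.toLinearMap ∘ₗ π5 ∘ₗ φ.e5.toLinearMap
    have hc1 : ∀ u : N.V1 × P.V1, π5 ((N.sum P).f1 u) = (N.sum P).f1 (π1 u) := by
      intro u
      show (N.f1 u.1, (0 : P.V5)) = (N.f1 u.1, P.f1 0)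
      rw [map_zero]
    have hc2 : ∀ u : N.V2 × P.V2, π5 ((N.sum P).f2 u) = (N.sum P).f2 (π2 u) := by
      intro u
      show (N.f2 u.1, (0 : P.V5)) = (N.f2 u.1, P.f2 0)
      rw [map_zero]
    have hc3 : ∀ u : N.V3 × P.V3, π5 ((N.sum P).f3 u) = (N.sum P).f3 (π3 u) := by
      intro u
      show (N.f3 u.1, (0 : P.V5)) = (N.f3 u.1, P.f3 0)
      rw [map_zero]
    have hc4 : ∀ u : N.V4 × P.V4, π5 ((N.sum P).f4 u) = (N.sum P).f4 (π4 u) := by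
      intro u
      show (N.f4 u.1, (0 : P.V5)) = (N.f4 u.1, P.f4 0)
      rw [map_zero]
    have key1 : ∀ x, ψ5 ((R n lam).f1 x) = (R n lam).f1 (ψ1 x) := by
      intro x
      show φ.e5.symm (π5 (φ.e5 ((R n lam).f1 x)))
          = (R n lam).f1 (φ.e1.symm (π1 (φ.e1 x)))
      rw [φ.comm1 x]; erw [hc1]
      have h := φ.comm1 (φ.e1.symm (π1 (φ.e1 x)))
      erw [LinearEquiv.apply_symm_apply] at h
      erw [← h, LinearEquiv.symm_apply_apply]
    have key2 : ∀ x, ψ5 ((R n lam).f2 x) = (R n lam).f2 (ψ2 x) := by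
      intro x
      show φ.e5.symm (π5 (φ.e5 ((R n lam).f2 x)))
          = (R n lam).f2 (φ.e2.symm (π2 (φ.e2 x)))
      rw [φ.comm2 x]; erw [hc2]
      have h := φ.comm2 (φ.e2.symm (π2 (φ.e2 x)))
      erw [LinearEquiv.apply_symm_apply] at h
      erw [← h, LinearEquiv.symm_apply_apply]
    have key3 : ∀ x, ψ5 ((R n lam).f3 x) = (R n lam).f3 (ψ3 x) := by
      intro x
      show φ.e5.symm (π5 (φ.e5 ((R n lam).f3 x)))
          = (R n lam).f3 (φ.e3.symm (π3 (φ.e3 x)))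
      rw [φ.comm3 x]; erw [hc3]
      have h := φ.comm3 (φ.e3.symm (π3 (φ.e3 x)))
      erw [LinearEquiv.apply_symm_apply] at h
      erw [← h, LinearEquiv.symm_apply_apply]
    have key4 : ∀ x, ψ5 ((R n lam).f4 x) = (R n lam).f4 (ψ4 x) := by
      intro x
      show φ.e5.symm (π5 (φ.e5 ((R n lam).f4 x)))
          = (R n lam).f4 (φ.e4.symm (π4 (φ.e4 x)))
      rw [φ.comm4 x]; erw [hc4]
      have h := φ.comm4 (φ.e4.symm (π4 (φ.e4 x)))
      erw [LinearEquiv.apply_symm_apply] at h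
      erw [← h, LinearEquiv.symm_apply_apply]
    have hidem : ∀ v, ψ5 (ψ5 v) = ψ5 v := by
      intro v
      show φ.e5.symm (π5 (φ.e5 (φ.e5.symm (π5 (φ.e5 v))))) = φ.e5.symm (π5 (φ.e5 v))
      erw [LinearEquiv.apply_symm_apply]
      rfl
    rcases endo_cases hn ψ1 ψ2 ψ3 ψ4 ψ5 key1 key2 key3 key4 hidem with
      ⟨z1, z2, z3, z4, z5⟩ | ⟨z1, z2, z3, z4, z5⟩
    · left
      refine ⟨?_, ?_, ?_, ?_, ?_⟩
      · refine subsingleton_of_forall_eq 0 fun a => ?_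
        have h' : φ.e1.symm (π1 (φ.e1 (φ.e1.symm (a, 0)))) = 0 := z1 _
        erw [LinearEquiv.apply_symm_apply] at h'
        have h'' := congrArg φ.e1 h'
        erw [LinearEquiv.apply_symm_apply, map_zero] at h''
        exact congrArg Prod.fst h''
      · refine subsingleton_of_forall_eq 0 fun a => ?_
        have h' : φ.e2.symm (π2 (φ.e2 (φ.e2.symm (a, 0)))) = 0 := z2 _
        erw [LinearEquiv.apply_symm_apply] at h'
        have h'' := congrArg φ.e2 h'
        erw [LinearEquiv.apply_symm_apply, map_zero] at h''
        exact congrArg Prod.fst h''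
      · refine subsingleton_of_forall_eq 0 fun a => ?_
        have h' : φ.e3.symm (π3 (φ.e3 (φ.e3.symm (a, 0)))) = 0 := z3 _
        erw [LinearEquiv.apply_symm_apply] at h'
        have h'' := congrArg φ.e3 h'
        erw [LinearEquiv.apply_symm_apply, map_zero] at h''
        exact congrArg Prod.fst h''
      · refine subsingleton_of_forall_eq 0 fun a => ?_
        have h' : φ.e4.symm (π4 (φ.e4 (φ.e4.symm (a, 0)))) = 0 := z4 _
        erw [LinearEquiv.apply_symm_apply] at h'
        have h'' := congrArg φ.e4 h'
        erw [LinearEquiv.apply_symm_apply, map_zero] at h''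
        exact congrArg Prod.fst h''
      · refine subsingleton_of_forall_eq 0 fun a => ?_
        have h' : φ.e5.symm (π5 (φ.e5 (φ.e5.symm (a, 0)))) = 0 := z5 _
        erw [LinearEquiv.apply_symm_apply] at h'
        have h'' := congrArg φ.e5 h'
        erw [LinearEquiv.apply_symm_apply, map_zero] at h''
        exact congrArg Prod.fst h''
    · right
      refine ⟨?_, ?_, ?_, ?_, ?_⟩
      · refine subsingleton_of_forall_eq 0 fun a => ?_
        have h' : φ.e1.symm (π1 (φ.e1 (φ.e1.symm (0, a)))) = φ.e1.symm (0, a) := z1 _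
        erw [LinearEquiv.apply_symm_apply] at h'
        have h'' := φ.e1.symm.injective h'
        exact (congrArg Prod.snd h'').symm
      · refine subsingleton_of_forall_eq 0 fun a => ?_
        have h' : φ.e2.symm (π2 (φ.e2 (φ.e2.symm (0, a)))) = φ.e2.symm (0, a) := z2 _
        erw [LinearEquiv.apply_symm_apply] at h'
        have h'' := φ.e2.symm.injective h'
        exact (congrArg Prod.snd h'').symm
      · refine subsingleton_of_forall_eq 0 fun a => ?_
        have h' : φ.e3.symm (π3 (φ.e3 (φ.e3.symm (0, a)))) = φ.e3.symm (0, a) := z3 _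
        erw [LinearEquiv.apply_symm_apply] at h'
        have h'' := φ.e3.symm.injective h'
        exact (congrArg Prod.snd h'').symm
      · refine subsingleton_of_forall_eq 0 fun a => ?_
        have h' : φ.e4.symm (π4 (φ.e4 (φ.e4.symm (0, a)))) = φ.e4.symm (0, a) := z4 _
        erw [LinearEquiv.apply_symm_apply] at h'
        have h'' := φ.e4.symm.injective h'
        exact (congrArg Prod.snd h'').symm
      · refine subsingleton_of_forall_eq 0 fun a => ?_
        have h' : φ.e5.symm (π5 (φ.e5 (φ.e5.symm (0, a)))) = φ.e5.symm (0, a) := z5 _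
        erw [LinearEquiv.apply_symm_apply] at h'
        have h'' := φ.e5.symm.injective h'
        exact (congrArg Prod.snd h'').symm
end

section
/- For $n > 0$ and $\lambda \neq \mu$ in $\mathbb{C}$, the representations $R_n(\lambda)$ and $R_n(\mu)$ of the quiver $\hat{D}_4$ are not isomorphic. -/
/-- For `n > 0` and `λ ≠ μ` in `ℂ`, the representations `R_n(λ)` and `R_n(μ)` of `D̂₄`
are not isomorphic. -/
theorem R_not_iso_of_ne (n : ℕ) (hn : 0 < n) (lam mu : ℂ) (h : lam ≠ mu) :
    IsEmpty (D4HatRepIso (R n lam) (R n mu)) := by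
  constructor
  intro iso
  have c1 : ∀ v, iso.e5 (v, 0) = (iso.e1 v, 0) := fun v => by
    have := iso.comm1 v; exact this
  have c2 : ∀ v, iso.e5 (0, v) = (0, iso.e2 v) := fun v => by
    have := iso.comm2 v; exact this
  have c3 : ∀ v, iso.e5 (v, v) = (iso.e3 v, iso.e3 v) := fun v => by
    have := iso.comm3 v; exact this
  have c4 : ∀ v, iso.e5 (v, jordan n lam v) = (iso.e4 v, jordan n mu (iso.e4 v)) := fun v => by
    have := iso.comm4 v; exact this
  have e5split : ∀ a b : Fin n → ℂ, iso.e5 (a, b) = (iso.e1 a, iso.e2 b) := by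
    intro a b
    have : ((a, b) : (Fin n → ℂ) × (Fin n → ℂ)) = (a, 0) + (0, b) := by simp
    rw [this]
    exact (map_add iso.e5 (a, 0) (0, b)).trans (by
      have h1 := c1 a
      have h2 := c2 b
      exact Prod.ext ((congrArg₂ (fun x y : (Fin n → ℂ) × (Fin n → ℂ) => x.1 + y.1) h1 h2).trans
        (add_zero _)) ((congrArg₂ (fun x y : (Fin n → ℂ) × (Fin n → ℂ) => x.2 + y.2) h1 h2).trans
        (zero_add _)))
  have h12 : ∀ v, iso.e1 v = iso.e2 v := by
    intro v
    have := (c3 v).symm.trans (e5split v v)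
    have h1 : iso.e3 v = iso.e1 v := congrArg Prod.fst this
    have h2 : iso.e3 v = iso.e2 v := congrArg Prod.snd this
    rw [← h1, ← h2]
  have key : ∀ v, iso.e1 (jordan n lam v) = jordan n mu (iso.e1 v) := by
    intro v
    have := (c4 v).symm.trans (e5split v (jordan n lam v))
    have h1 : iso.e4 v = iso.e1 v := congrArg Prod.fst this
    have h2 : jordan n mu (iso.e4 v) = iso.e2 (jordan n lam v) := congrArg Prod.snd this
    exact (h12 _).trans (h2.symm.trans (congrArg (jordan n mu) h1))
  -- conjugation
  let E : (Fin n → ℂ) ≃ₗ[ℂ] (Fin n → ℂ) := iso.e1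
  have keyE : ∀ v, E (jordan n lam v) = jordan n mu (E v) := fun v => key v
  have conj : E.conj (jordan n lam) = jordan n mu := by
    apply LinearMap.ext
    intro v
    simp only [LinearEquiv.conj_apply, LinearMap.coe_comp, Function.comp_apply,
      LinearEquiv.coe_coe]
    rw [keyE, LinearEquiv.apply_symm_apply]
  have tr : LinearMap.trace ℂ _ (jordan n lam) = LinearMap.trace ℂ _ (jordan n mu) := by
    rw [← conj]
    exact (LinearMap.trace_conj' (jordan n lam) E).symm
  have trj : ∀ x : ℂ, LinearMap.trace ℂ _ (jordan n x) = n * x := by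
    intro x
    rw [jordan, LinearMap.trace_eq_matrix_trace ℂ (Pi.basisFun ℂ (Fin n)),
      LinearMap.toMatrix_eq_toMatrix', LinearMap.toMatrix'_toLin']
    simp [Matrix.trace, Matrix.diag, Finset.sum_ite_eq, mul_comm]
  rw [trj, trj] at tr
  have : (n : ℂ) ≠ 0 := Nat.cast_ne_zero.mpr hn.ne'
  exact h (mul_left_cancel₀ this tr)
end
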